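/- Generalized rotational inertia of an ellipsoid: for a positive definite matrix Q ∈ 𝕊₊₊^{n}, center q ∈ ℝⁿ, reference point x_ref ∈ ℝⁿ, and positive definite weight D ∈ 𝕊₊₊^{n}, the ratio (∫_{E(q,Q)} (x−x_ref)ᵀD(x−x_ref) dx) / (∫_{E(q,Q)} 1 dx) equals (q−x_ref)ᵀD(q−x_ref) + Tr(DQ)/(n+2). -/

import Mathlib

open Matrix MeasureTheory

noncomputable def Matrix.PosSemidef.sqrt {m : ℕ} {A : Matrix (Fin m) (Fin m) ℝ}
    (hA : A.PosSemidef) : Matrix (Fin m) (Fin m) ℝ :=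
  hA.1.eigenvectorUnitary.1 * diagonal ((↑) ∘ (√·) ∘ hA.1.eigenvalues) *
  (star hA.1.eigenvectorUnitary : Matrix (Fin m) (Fin m) ℝ)

noncomputable def ellipsoid {m : ℕ} {Q : Matrix (Fin m) (Fin m) ℝ}
    (q : Fin m → ℝ) (hQ : Q.PosSemidef) : Set (Fin m → ℝ) :=
  {x | ∃ v : Fin m → ℝ, v ⬝ᵥ v ≤ 1 ∧ x = q + hQ.sqrt.mulVec v}

noncomputable def frob {p q : ℕ} (M : Matrix (Fin p) (Fin q) ℝ) : ℝ :=
  Real.sqrt (Matrix.trace (Mᵀ * M))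

theorem Matrix.PosSemidef.sqrt_mul_self {m : ℕ} {A : Matrix (Fin m) (Fin m) ℝ}
    (hA : A.PosSemidef) : hA.sqrt * hA.sqrt = A := by
  set U : Matrix (Fin m) (Fin m) ℝ := hA.1.eigenvectorUnitary.1 with hUdef
  set d : Matrix (Fin m) (Fin m) ℝ := diagonal ((↑) ∘ (√·) ∘ hA.1.eigenvalues) with hddef
  have hU : star U * U = 1 := Unitary.coe_star_mul_self _
  have hd : d * d = diagonal (RCLike.ofReal ∘ hA.1.eigenvalues) := by
    rw [hddef, diagonal_mul_diagonal]
    congr 1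
    funext i
    simp [Real.mul_self_sqrt (hA.eigenvalues_nonneg i)]
  conv_rhs => rw [hA.1.spectral_theorem, Unitary.conjStarAlgAut_apply]
  show U * d * star U * (U * d * star U) = _
  rw [show U * d * star U * (U * d * star U) = U * (d * (star U * U) * d) * star U by
    simp only [Matrix.mul_assoc], hU, Matrix.mul_one, hd]

theorem Matrix.PosSemidef.isHermitian_sqrt {m : ℕ} {A : Matrix (Fin m) (Fin m) ℝ}
    (hA : A.PosSemidef) : hA.sqrt.IsHermitian := by
  unfold Matrix.PosSemidef.sqrt
  simp [Matrix.IsHermitian, conjTranspose_mul, Matrix.mul_assoc, star_eq_conjTranspose,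
    conjTranspose_eq_transpose_of_trivial]

section Aux9sec
open Metric Set

namespace Aux9


variable {n : ℕ}


def Bn (n : ℕ) : Set (Fin n → ℝ) := {v | v ⬝ᵥ v ≤ 1}

lemma Bn_eq_preimage :
    Bn n = ((MeasurableEquiv.toLp 2 (Fin n → ℝ)).symm).symm ⁻¹' (closedBall (0:EuclideanSpace ℝ (Fin n)) 1) := by
  ext v
  simp only [Bn, Set.mem_setOf_eq, Set.mem_preimage, Metric.mem_closedBall, dist_zero_right,
    EuclideanSpace.norm_eq]
  have h1 : ∑ x : Fin n, ‖(((MeasurableEquiv.toLp 2 (Fin n → ℝ)).symm).symm v : EuclideanSpace ℝ (Fin n)) x‖ ^ 2 = v ⬝ᵥ v := by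
    simp [dotProduct, Real.norm_eq_abs, sq_abs, pow_two,
      show ∀ i, (((MeasurableEquiv.toLp 2 (Fin n → ℝ)).symm).symm v : EuclideanSpace ℝ (Fin n)) i = v i from fun _ => rfl]
  rw [h1, Real.sqrt_le_left (by norm_num : (0:ℝ) ≤ 1)]
  norm_num

lemma measurableSet_Bn : MeasurableSet (Bn n) := by
  have : IsClosed (Bn n) := by
    have : Continuous fun v : Fin n → ℝ => v ⬝ᵥ v := by
      unfold dotProduct
      exact continuous_finset_sum _ fun i _ => (continuous_apply i).mul (continuous_apply i)
    exact isClosed_le this continuous_const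
  exact this.measurableSet

lemma isCompact_Bn : IsCompact (Bn n) := by
  rw [Bn_eq_preimage]
  have := (isCompact_closedBall (0:EuclideanSpace ℝ (Fin n)) 1)
  have h2 : ((MeasurableEquiv.toLp 2 (Fin n → ℝ)).symm).symm ⁻¹' (closedBall (0:EuclideanSpace ℝ (Fin n)) 1)
      = ((MeasurableEquiv.toLp 2 (Fin n → ℝ)).symm) '' (closedBall (0:EuclideanSpace ℝ (Fin n)) 1) := by
    rw [MeasurableEquiv.image_eq_preimage_symm]
  rw [h2]
  exact this.image (PiLp.continuous_ofLp 2 _)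

lemma setIntegral_Bn_transfer (g : (Fin n → ℝ) → ℝ) :
    ∫ v in Bn n, g v = ∫ x in closedBall (0:EuclideanSpace ℝ (Fin n)) 1,
      g (((MeasurableEquiv.toLp 2 (Fin n → ℝ)).symm) x) := by
  rw [Bn_eq_preimage]
  rw [← MeasurePreserving.setIntegral_preimage_emb
    (MeasurePreserving.symm _ (EuclideanSpace.volume_preserving_symm_measurableEquiv_toLp (Fin n)))
    ((MeasurableEquiv.toLp 2 (Fin n → ℝ)).symm).symm.measurableEmbedding
    (fun y => g (((MeasurableEquiv.toLp 2 (Fin n → ℝ)).symm) y))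
    (closedBall (0:EuclideanSpace ℝ (Fin n)) 1)]
  refine setIntegral_congr_fun (measurableSet_closedBall.preimage
    ((MeasurableEquiv.toLp 2 (Fin n → ℝ)).symm).symm.measurable) fun v _ => ?_
  rw [MeasurableEquiv.apply_symm_apply]

lemma volume_Bn : volume (Bn n) = volume (closedBall (0:EuclideanSpace ℝ (Fin n)) 1) := by
  rw [Bn_eq_preimage]
  exact (MeasurePreserving.symm _ (EuclideanSpace.volume_preserving_symm_measurableEquiv_toLp (Fin n))).measure_preimage
    measurableSet_closedBall.nullMeasurableSet





lemma setIntegral_Bn_odd (g : (Fin n → ℝ) → ℝ) (hg : ∀ v, g (-v) = - g v) :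
    ∫ v in Bn n, g v = 0 := by
  have hmp : MeasurePreserving (fun v : Fin n → ℝ => -v) volume volume :=
    Measure.measurePreserving_neg _
  have hemb : MeasurableEmbedding (fun v : Fin n → ℝ => -v) :=
    (Homeomorph.neg (Fin n → ℝ)).measurableEmbedding
  have hpre : (fun v : Fin n → ℝ => -v) ⁻¹' Bn n = Bn n := by
    ext v
    simp [Bn, dotProduct]
  have h1 := MeasurePreserving.setIntegral_preimage_emb hmp hemb g (Bn n)
  rw [hpre] at h1
  have h2 : ∫ v in Bn n, g (-v) = ∫ v in Bn n, (-(g v)) := by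
    simp_rw [hg]
  rw [h2, integral_neg] at h1
  linarith

lemma mom_offdiag (i j : Fin n) (hij : i ≠ j) : ∫ v in Bn n, v i * v j = 0 := by
  classical
  set T : (Fin n → ℝ) ≃ᵐ (Fin n → ℝ) :=
    MeasurableEquiv.piCongrRight (fun k => if k = i then (Homeomorph.neg ℝ).toMeasurableEquiv
      else MeasurableEquiv.refl ℝ) with hT
  have hTapp : ∀ (v : Fin n → ℝ) (k : Fin n), T v k = if k = i then -(v k) else v k := by
    intro v k
    show (if k = i then (Homeomorph.neg ℝ).toMeasurableEquiv else MeasurableEquiv.refl ℝ) (v k) = _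
    by_cases h : k = i <;> simp [h]
  have hmp : MeasurePreserving T volume volume := by
    have h := volume_preserving_pi (α' := fun _ : Fin n => ℝ) (β' := fun _ : Fin n => ℝ)
      (f := fun k x => (if k = i then (Homeomorph.neg ℝ).toMeasurableEquiv
        else MeasurableEquiv.refl ℝ) x)
      (fun k => by
        by_cases h : k = i
        · simp only [h, if_pos]
          exact Measure.measurePreserving_neg _
        · simp only [h, if_neg, not_false_iff]
          exact MeasurePreserving.id _)
    exact h
  have hpre : T ⁻¹' Bn n = Bn n := by
    ext v
    have : (T v) ⬝ᵥ (T v) = v ⬝ᵥ v := by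
      unfold dotProduct
      refine Finset.sum_congr rfl fun k _ => ?_
      rw [hTapp]
      by_cases h : k = i <;> simp [h]
    simp [Bn, this]
  have h1 := MeasurePreserving.setIntegral_preimage_emb hmp T.measurableEmbedding
    (fun v => v i * v j) (Bn n)
  rw [hpre] at h1
  have h2 : ∫ v in Bn n, T v i * T v j = ∫ v in Bn n, (-(v i * v j)) := by
    refine integral_congr_ae (Filter.Eventually.of_forall fun v => ?_)
    show T v i * T v j = -(v i * v j)
    rw [hTapp, hTapp]
    simp [hij.symm, neg_mul]
  rw [h2, integral_neg] at h1
  linarith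

lemma mom_diag_eq (i j : Fin n) : (∫ v in Bn n, v i * v i) = ∫ v in Bn n, v j * v j := by
  classical
  set σ : Fin n ≃ Fin n := Equiv.swap i j with hσ
  set T : (Fin n → ℝ) ≃ᵐ (Fin n → ℝ) := MeasurableEquiv.piCongrLeft (fun _ : Fin n => ℝ) σ with hT
  have hTapp : ∀ (v : Fin n → ℝ) (k : Fin n), T v k = v (σ.symm k) := by
    intro v k
    conv_lhs => rw [show k = σ (σ.symm k) by simp]
    exact MeasurableEquiv.piCongrLeft_apply_apply (β := fun _ : Fin n => ℝ) σ v (σ.symm k)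
  have hmp : MeasurePreserving T volume volume :=
    volume_measurePreserving_piCongrLeft (fun _ : Fin n => ℝ) σ
  have hpre : T ⁻¹' Bn n = Bn n := by
    ext v
    have : (T v) ⬝ᵥ (T v) = v ⬝ᵥ v := by
      unfold dotProduct
      simp_rw [hTapp]
      exact Fintype.sum_equiv σ.symm _ _ fun k => rfl
    simp [Bn, this]
  have h1 := MeasurePreserving.setIntegral_preimage_emb hmp T.measurableEmbedding
    (fun v => v j * v j) (Bn n)
  rw [hpre] at h1
  have h2 : ∫ v in Bn n, T v j * T v j = ∫ v in Bn n, v i * v i := by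
    refine integral_congr_ae (Filter.Eventually.of_forall fun v => ?_)
    show T v j * T v j = v i * v i
    rw [hTapp]
    simp [hσ]
  rw [h2] at h1
  exact h1



lemma integral_normsq (hn : 0 < n) :
    ∫ x in closedBall (0:EuclideanSpace ℝ (Fin n)) 1, ‖x‖^2
      = n * (volume (closedBall (0:EuclideanSpace ℝ (Fin n)) 1)).toReal / (n + 2) := by
  haveI : Nonempty (Fin n) := Fin.pos_iff_nonempty.mp hn
  haveI : Nontrivial (EuclideanSpace ℝ (Fin n)) := by
    refine ⟨0, EuclideanSpace.single (Classical.arbitrary (Fin n)) 1, fun h => ?_⟩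
    have := congrFun (congrArg WithLp.ofLp h.symm) (Classical.arbitrary (Fin n))
    simp [EuclideanSpace.single_apply] at this
  classical
  set F : ℝ → ℝ := fun y => if y ≤ 1 then y ^ 2 else 0 with hF
  have key := integral_fun_norm_addHaar (volume : Measure (EuclideanSpace ℝ (Fin n))) F
  have hdim : Module.finrank ℝ (EuclideanSpace ℝ (Fin n)) = n := finrank_euclideanSpace_fin
  rw [hdim] at key
  have hlhs : ∫ x : EuclideanSpace ℝ (Fin n), F ‖x‖
      = ∫ x in closedBall (0:EuclideanSpace ℝ (Fin n)) 1, ‖x‖^2 := by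
    rw [← integral_indicator (measurableSet_closedBall)]
    congr 1
    funext x
    rw [Set.indicator_apply]
    simp only [Metric.mem_closedBall, dist_zero_right]
    rfl
  have hball : volume (ball (0:EuclideanSpace ℝ (Fin n)) 1)
      = volume (closedBall (0:EuclideanSpace ℝ (Fin n)) 1) := by
    rw [← ball_union_sphere]
    refine le_antisymm (measure_mono Set.subset_union_left) ?_
    calc volume (ball (0:EuclideanSpace ℝ (Fin n)) 1 ∪ sphere 0 1)
        ≤ volume (ball (0:EuclideanSpace ℝ (Fin n)) 1) + volume (sphere (0:EuclideanSpace ℝ (Fin n)) 1) :=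
          measure_union_le _ _
      _ = volume (ball (0:EuclideanSpace ℝ (Fin n)) 1) := by
          rw [Measure.addHaar_sphere, add_zero]
  have hI : ∫ y in Ioi (0:ℝ), y ^ (n - 1) • F y = 1 / (n + 2) := by
    have h1 : ∫ y in Ioi (0:ℝ), y ^ (n - 1) • F y
        = ∫ y in Ioi (0:ℝ), Set.indicator (Ioc (0:ℝ) 1) (fun y => y ^ (n + 1)) y := by
      refine setIntegral_congr_fun measurableSet_Ioi fun y hy => ?_
      simp only [hF, smul_eq_mul, Set.indicator_apply, Set.mem_Ioc]
      by_cases h : y ≤ 1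
      · rw [if_pos h, if_pos ⟨hy, h⟩, ← pow_add]
        congr 1
        omega
      · rw [if_neg h, if_neg (fun hc => h hc.2), mul_zero]
    rw [h1, setIntegral_indicator measurableSet_Ioc,
      show Ioi (0:ℝ) ∩ Ioc (0:ℝ) 1 = Ioc (0:ℝ) 1 from
        Set.inter_eq_right.mpr Set.Ioc_subset_Ioi_self,
      ← intervalIntegral.integral_of_le (by norm_num : (0:ℝ) ≤ 1),
      integral_pow]
    push_cast
    norm_num
    ring
  rw [hlhs, hI, measureReal_def, hball] at key
  rw [key]
  push_cast
  rw [nsmul_eq_mul, smul_eq_mul]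
  ring


lemma integrableOn_Bn {g : (Fin n → ℝ) → ℝ} (hg : Continuous g) :
    IntegrableOn g (Bn n) := hg.continuousOn.integrableOn_compact isCompact_Bn

lemma continuous_dot_self : Continuous fun v : Fin n → ℝ => v ⬝ᵥ v := by
  unfold dotProduct
  exact continuous_finset_sum _ fun i _ => (continuous_apply i).mul (continuous_apply i)

lemma integral_dot_self :
    ∫ v in Bn n, v ⬝ᵥ v = n * (volume (Bn n)).toReal / (n + 2) := by
  rcases Nat.eq_zero_or_pos n with hn | hn
  · subst hn
    simp [dotProduct]
  · rw [setIntegral_Bn_transfer, volume_Bn]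
    rw [← integral_normsq hn]
    refine setIntegral_congr_fun measurableSet_closedBall fun x _ => ?_
    have : (fun i => (((MeasurableEquiv.toLp 2 (Fin n → ℝ)).symm) x : Fin n → ℝ) i) = fun i => x i := rfl
    show (((MeasurableEquiv.toLp 2 (Fin n → ℝ)).symm) x : Fin n → ℝ) ⬝ᵥ _ = _
    rw [show ∀ y : EuclideanSpace ℝ (Fin n),
        (((MeasurableEquiv.toLp 2 (Fin n → ℝ)).symm) y : Fin n → ℝ) = fun i => y i from fun _ => rfl]
    rw [← real_inner_self_eq_norm_sq]
    simp [PiLp.inner_apply, RCLike.inner_apply, dotProduct]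
    rw [EuclideanSpace.norm_eq, Real.sq_sqrt (by positivity)]
    simp [Real.norm_eq_abs, pow_two]

lemma mom (i j : Fin n) :
    ∫ v in Bn n, v i * v j
      = if i = j then (volume (Bn n)).toReal / (n + 2) else 0 := by
  by_cases hij : i = j
  · subst hij
    rw [if_pos rfl]
    have hn : 0 < n := i.pos
    have hsum : ∑ k : Fin n, ∫ v in Bn n, v k * v k = ∫ v in Bn n, v ⬝ᵥ v := by
      rw [← integral_finset_sum _ fun k _ =>
        integrableOn_Bn (g := fun v => v k * v k) ((continuous_apply k).mul (continuous_apply k))]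
      rfl
    have hconst : ∑ k : Fin n, ∫ v in Bn n, v k * v k
        = n * ∫ v in Bn n, v i * v i := by
      rw [Finset.sum_congr rfl fun k _ => mom_diag_eq k i]
      simp [Finset.sum_const, Finset.card_univ, mul_comm, nsmul_eq_mul]
    rw [hconst, integral_dot_self] at hsum
    have hn' : (n : ℝ) ≠ 0 := Nat.cast_ne_zero.mpr hn.ne'
    rw [mul_div_assoc] at hsum
    exact mul_left_cancel₀ hn' hsum
  · rw [if_neg hij]
    exact mom_offdiag i j hij

lemma integral_linear (b : Fin n → ℝ) : ∫ v in Bn n, b ⬝ᵥ v = 0 := by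
  refine setIntegral_Bn_odd _ fun v => ?_
  simp [dotProduct_neg]

lemma integral_quad (M : Matrix (Fin n) (Fin n) ℝ) :
    ∫ v in Bn n, v ⬝ᵥ M.mulVec v
      = Matrix.trace M * (volume (Bn n)).toReal / (n + 2) := by
  have hpt : ∀ v : Fin n → ℝ, v ⬝ᵥ M.mulVec v = ∑ i, ∑ j, M i j * (v i * v j) := by
    intro v
    simp only [dotProduct, Matrix.mulVec, Finset.mul_sum]
    exact Finset.sum_congr rfl fun i _ => Finset.sum_congr rfl fun j _ => by ring
  calc ∫ v in Bn n, v ⬝ᵥ M.mulVec v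
      = ∫ v in Bn n, ∑ i, ∑ j, M i j * (v i * v j) := by
        refine setIntegral_congr_fun measurableSet_Bn fun v _ => hpt v
    _ = ∑ i, ∫ v in Bn n, ∑ j, M i j * (v i * v j) := by
        refine integral_finset_sum _ fun i _ => ?_
        refine integrableOn_Bn ?_
        exact continuous_finset_sum _ fun j _ =>
          continuous_const.mul ((continuous_apply i).mul (continuous_apply j))
    _ = ∑ i, ∑ j, ∫ v in Bn n, M i j * (v i * v j) := by
        refine Finset.sum_congr rfl fun i _ => ?_
        refine integral_finset_sum _ fun j _ => ?_
        exact integrableOn_Bn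
          (continuous_const.mul ((continuous_apply i).mul (continuous_apply j)))
    _ = ∑ i, ∑ j, M i j * ∫ v in Bn n, v i * v j := by
        simp_rw [integral_const_mul]
    _ = ∑ i, M i i * ((volume (Bn n)).toReal / (n + 2)) := by
        refine Finset.sum_congr rfl fun i _ => ?_
        rw [Finset.sum_eq_single i]
        · rw [mom, if_pos rfl]
        · intro j _ hj
          rw [mom, if_neg (Ne.symm hj), mul_zero]
        · intro h
          exact absurd (Finset.mem_univ i) h
    _ = Matrix.trace M * (volume (Bn n)).toReal / (n + 2) := by
        rw [← Finset.sum_mul]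
        simp only [Matrix.trace, Matrix.diag, mul_div_assoc]

end Aux9

open Aux9 Metric Set

theorem stmt9 {n : ℕ} (q xref : Fin n → ℝ) {Q D : Matrix (Fin n) (Fin n) ℝ}
    (hQ : Q.PosDef) (hD : D.PosDef) :
    (∫ x in ellipsoid q hQ.posSemidef, (x - xref) ⬝ᵥ D.mulVec (x - xref)) /
      (∫ _x in ellipsoid q hQ.posSemidef, (1 : ℝ)) =
    (q - xref) ⬝ᵥ D.mulVec (q - xref) + Matrix.trace (D * Q) / ((n : ℝ) + 2) := by
  classical
  set S := hQ.posSemidef.sqrt with hSdef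
  have hS2 : S * S = Q := hQ.posSemidef.sqrt_mul_self
  have hSsym : Sᵀ = S := by
    have h := hQ.posSemidef.isHermitian_sqrt
    rwa [Matrix.IsHermitian, Matrix.conjTranspose_eq_transpose_of_trivial] at h
  have hdet : S.det ≠ 0 := by
    have h1 : S.det * S.det = Q.det := by rw [← Matrix.det_mul, hS2]
    intro h
    rw [h, mul_zero] at h1
    exact hQ.det_pos.ne' h1.symm
  set u := q - xref with hu
  set c := u ⬝ᵥ D.mulVec u with hc
  set M : Matrix (Fin n) (Fin n) ℝ := Sᵀ * (D * S) with hM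
  set b := Matrix.vecMul u (D * S) + Matrix.vecMul (D.mulVec u) S with hb
  set f : (Fin n → ℝ) → (Fin n → ℝ) := fun v => q + Matrix.toLin' S v with hf
  have hfapp : ∀ v, f v = q + S.mulVec v := by
    intro v; rw [hf]; simp [Matrix.toLin'_apply]
  have himg : ellipsoid q hQ.posSemidef = f '' Bn n := by
    ext x
    constructor
    · rintro ⟨v, hv, rfl⟩
      exact ⟨v, hv, (hfapp v).symm⟩
    · rintro ⟨v, hv, rfl⟩
      exact ⟨v, hv, (hfapp v)⟩
  have hmvinj : Function.Injective (S.mulVec) :=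
    Matrix.mulVec_injective_iff_isUnit.mpr
      ((Matrix.isUnit_iff_isUnit_det S).mpr (isUnit_iff_ne_zero.mpr hdet))
  have hCV : ∀ g : (Fin n → ℝ) → ℝ, ∫ x in ellipsoid q hQ.posSemidef, g x
      = |S.det| * ∫ v in Bn n, g (q + S.mulVec v) := by
    intro g
    rw [himg]
    have hder : ∀ v ∈ Bn n, HasFDerivWithinAt f
        (LinearMap.toContinuousLinearMap (Matrix.toLin' S)) (Bn n) v := fun v _ =>
      (((LinearMap.toContinuousLinearMap (Matrix.toLin' S)).hasFDerivAt).const_add q).hasFDerivWithinAt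
    have hinj : Set.InjOn f (Bn n) := by
      intro a _ a' _ h
      rw [hfapp, hfapp] at h
      exact hmvinj (add_left_cancel h)
    rw [integral_image_eq_integral_abs_det_fderiv_smul volume measurableSet_Bn hder hinj g]
    simp only [ContinuousLinearMap.det, ContinuousLinearMap.coe_coe,
      LinearMap.coe_toContinuousLinearMap, LinearMap.det_toLin', smul_eq_mul]
    rw [← integral_const_mul]
    exact setIntegral_congr_fun measurableSet_Bn fun v _ => by rw [hfapp]
  set V := (volume (Bn n)).toReal with hV
  have hVpos : 0 < V := by
    rw [hV, volume_Bn]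
    exact ENNReal.toReal_pos (measure_closedBall_pos volume _ one_pos).ne'
      measure_closedBall_lt_top.ne
  have hden : ∫ _x in ellipsoid q hQ.posSemidef, (1:ℝ) = |S.det| * V := by
    rw [hCV fun _ => (1:ℝ)]
    rw [setIntegral_const]
    simp [hV, measureReal_def]
  have hexp : ∀ w : Fin n → ℝ,
      (q + S.mulVec w - xref) ⬝ᵥ D.mulVec (q + S.mulVec w - xref)
        = c + (b ⬝ᵥ w + w ⬝ᵥ M.mulVec w) := by
    intro w
    have h0 : q + S.mulVec w - xref = u + S.mulVec w := by rw [hu]; abel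
    rw [h0]
    rw [Matrix.mulVec_add, dotProduct_add, add_dotProduct,
      add_dotProduct, Matrix.mulVec_mulVec]
    have e1 : u ⬝ᵥ (D * S).mulVec w = Matrix.vecMul u (D * S) ⬝ᵥ w :=
      Matrix.dotProduct_mulVec u (D * S) w
    have e2 : S.mulVec w ⬝ᵥ D.mulVec u = Matrix.vecMul (D.mulVec u) S ⬝ᵥ w := by
      rw [dotProduct_comm, Matrix.dotProduct_mulVec]
    have e3 : S.mulVec w ⬝ᵥ (D * S).mulVec w = w ⬝ᵥ M.mulVec w := by
      rw [Matrix.dotProduct_mulVec, Matrix.vecMul_mulVec, hM,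
        ← Matrix.dotProduct_mulVec]
    rw [e1, e2, e3, hb, add_dotProduct, hc]
    ring
  have hnum : ∫ x in ellipsoid q hQ.posSemidef, (x - xref) ⬝ᵥ D.mulVec (x - xref)
      = |S.det| * (c * V + Matrix.trace M * V / ((n:ℝ) + 2)) := by
    rw [hCV fun x => (x - xref) ⬝ᵥ D.mulVec (x - xref)]
    congr 1
    have hrw : ∫ v in Bn n, (q + S.mulVec v - xref) ⬝ᵥ D.mulVec (q + S.mulVec v - xref)
        = ∫ v in Bn n, (c + (b ⬝ᵥ v + v ⬝ᵥ M.mulVec v)) :=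
      setIntegral_congr_fun measurableSet_Bn fun w _ => hexp w
    rw [hrw]
    have hcb : Continuous fun w : Fin n → ℝ => b ⬝ᵥ w := by
      show Continuous fun w : Fin n → ℝ => ∑ i, b i * w i
      exact continuous_finset_sum _ fun i _ => continuous_const.mul (continuous_apply i)
    have hcq : Continuous fun w : Fin n → ℝ => w ⬝ᵥ M.mulVec w := by
      show Continuous fun w : Fin n → ℝ => ∑ i, w i * ∑ j, M i j * w j
      exact continuous_finset_sum _ fun i _ => (continuous_apply i).mul
        (continuous_finset_sum _ fun j _ => continuous_const.mul (continuous_apply j))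
    rw [integral_add (integrableOn_Bn continuous_const)
      (integrableOn_Bn (g := fun w => b ⬝ᵥ w + w ⬝ᵥ M.mulVec w) (hcb.add hcq)),
      integral_add (integrableOn_Bn hcb) (integrableOn_Bn hcq),
      setIntegral_const, integral_linear, integral_quad, smul_eq_mul, measureReal_def]
    ring
  have htr : Matrix.trace M = Matrix.trace (D * Q) := by
    rw [hM, hSsym, ← Matrix.mul_assoc, Matrix.trace_mul_cycle, hS2, Matrix.trace_mul_comm]
  rw [hnum, hden, htr]
  have hd : |S.det| ≠ 0 := abs_ne_zero.mpr hdet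
  have hn2 : ((n:ℝ) + 2) ≠ 0 := by positivity
  field_simp

end Aux9sec
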